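/- Bounded row sums: let A be the adjacency matrix of a random non-uniform hypergraph as in the context, and suppose d := Σ_{m=2}^M (m−1)d_m ≥ c·log n for some constant c > 0. Then for any K > 0, with α₁ := 4 + 2(M−1)(1+K)/(3c), one has ℙ( max_{1 ≤ i ≤ n} Σ_{j=1}^n A_{ij} ≤ α₁·d ) ≥ 1 − n^{−K}. -/

import Mathlib

open MeasureTheory

/-- The adjacency matrix of the random non-uniform hypergraph with edge indicators `T`. -/
noncomputable def adjMatrix (n M : ℕ) {Ω : Type*} (T : Finset (Fin n) → Ω → Bool) (ω : Ω) :
    Matrix (Fin n) (Fin n) ℝ :=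
  Matrix.of fun i j => if i = j then 0 else
    ∑ m ∈ Finset.Icc 2 M, ∑ e ∈ Finset.univ.filter
      (fun e : Finset (Fin n) => e.card = m ∧ i ∈ e ∧ j ∈ e),
        (if T e ω then (1 : ℝ) else 0)

lemma exp_three_halves_lt_seven : Real.exp (3/2) < 7 := by
  have h1 : Real.exp 1 < 2.7182818286 := Real.exp_one_lt_d9
  have h3 : Real.exp 3 < 49 := by
    have : Real.exp 3 = (Real.exp 1) ^ 3 := by
      rw [← Real.exp_nat_mul]; norm_num
    rw [this]
    calc (Real.exp 1)^3 < 2.7182818286^3 := by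
          gcongr
      _ < 49 := by norm_num
  have h2 : Real.exp (3/2) ^ 2 = Real.exp 3 := by
    rw [← Real.exp_nat_mul]; norm_num
  nlinarith [Real.exp_pos (3/2 : ℝ)]

lemma convex_exp_bound {s a b : ℝ} (hs : 0 ≤ s) (ha : 0 ≤ a) (hab : a ≤ b) (hb : 0 < b) :
    Real.exp (s*a) - 1 ≤ (a/b) * (Real.exp (s*b) - 1) := by
  have hθ : 0 ≤ a / b := div_nonneg ha hb.le
  have hθ1 : a / b ≤ 1 := (div_le_one hb).2 hab
  have key := convexOn_exp.2 (Set.mem_univ (s*b)) (Set.mem_univ 0) hθ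
    (by linarith : (0:ℝ) ≤ 1 - a/b) (by ring)
  simp only [smul_eq_mul, mul_zero, add_zero, Real.exp_zero] at key
  have : (a/b) * (s*b) = s * a := by field_simp
  rw [this] at key
  linarith

lemma bernoulli_mgf {Ω : Type*} [MeasurableSpace Ω] (μ : Measure Ω) [IsProbabilityMeasure μ]
    (Y : Ω → Bool) (hY : Measurable Y) (q : ℝ) (hq0 : 0 ≤ q)
    (hqY : μ {ω | Y ω = true} = ENNReal.ofReal q) (a t : ℝ) :
    ProbabilityTheory.mgf (fun ω => a * (if Y ω then 1 else 0)) μ t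
      = 1 + q * (Real.exp (t*a) - 1) := by
  have hq1 : q ≤ 1 := by
    by_contra h
    push_neg at h
    have := hqY ▸ prob_le_one (μ := μ) (s := {ω | Y ω = true})
    rw [ENNReal.ofReal_le_one] at this
    linarith
  have hset : MeasurableSet {ω | Y ω = true} := hY (measurableSet_singleton true)
  have heq : (fun ω => Real.exp (t * (a * (if Y ω then 1 else 0))))
      = fun ω => Set.indicator {ω | Y ω = true} (fun _ => Real.exp (t*a) - 1) ω + 1 := by
    funext ω
    by_cases h : Y ω
    · simp [h, Set.indicator_of_mem, Set.mem_setOf_eq]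
    · simp [h, Set.indicator_of_notMem, Set.mem_setOf_eq, Real.exp_zero]
  rw [ProbabilityTheory.mgf]
  simp only [heq]
  rw [integral_add ((integrable_const _).indicator hset) (integrable_const 1),
    integral_indicator hset, integral_const, integral_const]
  simp [hqY, ENNReal.toReal_ofReal hq0, mul_comm]
  rw [measureReal_def, hqY, ENNReal.toReal_ofReal hq0]
  ring
lemma rowsum_eq (n M : ℕ) {Ω : Type*} (T : Finset (Fin n) → Ω → Bool) (ω : Ω) (i : Fin n) :
    ∑ j, adjMatrix n M T ω i j
      = ∑ m ∈ Finset.Icc 2 M,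
          ∑ e ∈ Finset.univ.filter (fun e : Finset (Fin n) => e.card = m ∧ i ∈ e),
            ((m : ℝ) - 1) * (if T e ω then 1 else 0) := by
  classical
  unfold adjMatrix
  simp only [Matrix.of_apply]
  rw [← Finset.sum_erase_add _ _ (Finset.mem_univ i)]
  simp only [eq_self_iff_true, if_true, add_zero]
  have hstep : ∀ j ∈ Finset.univ.erase i,
      (if i = j then (0:ℝ) else ∑ m ∈ Finset.Icc 2 M, ∑ e ∈ Finset.univ.filter
        (fun e : Finset (Fin n) => e.card = m ∧ i ∈ e ∧ j ∈ e), (if T e ω then (1:ℝ) else 0))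
      = ∑ m ∈ Finset.Icc 2 M, ∑ e ∈ Finset.univ.filter
        (fun e : Finset (Fin n) => e.card = m ∧ i ∈ e ∧ j ∈ e), (if T e ω then (1:ℝ) else 0) := by
    intro j hj
    rw [if_neg (fun h => (Finset.mem_erase.1 hj).1 h.symm)]
  rw [Finset.sum_congr rfl hstep]
  rw [show (∑ j ∈ Finset.univ.erase i, ∑ m ∈ Finset.Icc 2 M, ∑ e ∈ Finset.univ.filter
        (fun e : Finset (Fin n) => e.card = m ∧ i ∈ e ∧ j ∈ e), (if T e ω then (1:ℝ) else 0))
      = ∑ m ∈ Finset.Icc 2 M, ∑ j ∈ Finset.univ.erase i, ∑ e ∈ Finset.univ.filter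
        (fun e : Finset (Fin n) => e.card = m ∧ i ∈ e ∧ j ∈ e), (if T e ω then (1:ℝ) else 0)
      from Finset.sum_comm]
  apply Finset.sum_congr rfl
  intro m hm
  have hswap : (∑ j ∈ Finset.univ.erase i, ∑ e ∈ Finset.univ.filter
        (fun e : Finset (Fin n) => e.card = m ∧ i ∈ e ∧ j ∈ e), (if T e ω then (1:ℝ) else 0))
      = ∑ e ∈ Finset.univ.filter (fun e : Finset (Fin n) => e.card = m ∧ i ∈ e),
          ∑ _j ∈ e.erase i, (if T e ω then (1:ℝ) else 0) := by
    refine Finset.sum_comm' fun j e => ?_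
    simp only [Finset.mem_erase, Finset.mem_univ, Finset.mem_filter, true_and, and_true]
    constructor
    · rintro ⟨hji, hcard, hie, hje⟩; exact ⟨⟨hji, hje⟩, hcard, hie⟩
    · rintro ⟨⟨hji, hje⟩, hcard, hie⟩; exact ⟨hji, hcard, hie, hje⟩
  rw [hswap]
  refine Finset.sum_congr rfl fun e he => ?_
  simp only [Finset.mem_filter, Finset.mem_univ, true_and] at he
  rw [Finset.sum_const, Finset.card_erase_of_mem he.2, he.1, nsmul_eq_mul]
  have hm2 : 2 ≤ m := (Finset.mem_Icc.1 hm).1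
  have : ((m - 1 : ℕ) : ℝ) = (m : ℝ) - 1 := by
    have : 1 ≤ m := by omega
    push_cast [Nat.cast_sub this]; ring
  rw [this]


/-- Bounded row sums: if `d := Σ (m-1) d_m ≥ c log n`, then with probability at least
`1 - n^{-K}` every row sum of the adjacency matrix is at most `α₁·d`, where
`α₁ = 4 + 2(M-1)(1+K)/(3c)`. -/
theorem adjacency_bounded_row_sums
    {Ω : Type*} [MeasurableSpace Ω] (μ : Measure Ω) [IsProbabilityMeasure μ]
    (n M : ℕ) (hn : 2 ≤ n) (hM : 2 ≤ M)
    (T : Finset (Fin n) → Ω → Bool) (hTmeas : ∀ e, Measurable (T e))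
    (hTindep : ProbabilityTheory.iIndepFun T μ)
    (p : Finset (Fin n) → ℝ) (hp0 : ∀ e, 0 ≤ p e)
    (hpT : ∀ e, μ {ω | T e ω = true} = ENNReal.ofReal (p e))
    (dm : ℕ → ℝ) (hdm : ∀ m, 0 ≤ dm m)
    (hpbound : ∀ e : Finset (Fin n), e.card ∈ Finset.Icc 2 M →
      p e ≤ dm e.card / (n.choose (e.card - 1)))
    (c K : ℝ) (hc : 0 < c) (hK : 0 < K)
    (hd : c * Real.log n ≤ ∑ m ∈ Finset.Icc 2 M, ((m : ℝ) - 1) * dm m) :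
    ENNReal.ofReal (1 - (n : ℝ) ^ (-K)) ≤
      μ {ω | ∀ i : Fin n, ∑ j, adjMatrix n M T ω i j ≤
        (4 + 2 * ((M : ℝ) - 1) * (1 + K) / (3 * c)) *
          ∑ m ∈ Finset.Icc 2 M, ((m : ℝ) - 1) * dm m} := by
  classical
  set d : ℝ := ∑ m ∈ Finset.Icc 2 M, ((m : ℝ) - 1) * dm m with hd_def
  set α : ℝ := 4 + 2 * ((M : ℝ) - 1) * (1 + K) / (3 * c) with hα_def
  set b : ℝ := (M : ℝ) - 1 with hb_def
  have hb1 : 1 ≤ b := by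
    have : (2 : ℝ) ≤ (M : ℝ) := by exact_mod_cast hM
    simp [hb_def]; linarith
  have hb0 : 0 < b := lt_of_lt_of_le one_pos hb1
  set s : ℝ := 3 / (2 * b) with hs_def
  have hs0 : 0 < s := by positivity
  have hsb : s * b = 3 / 2 := by rw [hs_def]; field_simp
  have hlogn : 0 < Real.log n := by
    apply Real.log_pos; exact_mod_cast by omega
  have hd0 : 0 < d := lt_of_lt_of_le (by positivity) hd
  -- the summands
  set X : Finset (Fin n) → Ω → ℝ :=
    fun e ω => ((e.card : ℝ) - 1) * (if T e ω then 1 else 0) with hX_def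
  have hXmeas : ∀ e, Measurable (X e) := fun e =>
    (Measurable.of_discrete (f := fun bo : Bool => ((e.card : ℝ) - 1) * (if bo then 1 else 0))).comp
      (hTmeas e)
  have hXindep : ProbabilityTheory.iIndepFun X μ :=
    hTindep.comp (fun e bo => ((e.card : ℝ) - 1) * (if bo then 1 else 0))
      (fun e => Measurable.of_discrete)
  -- index sets
  set E : Fin n → Finset (Finset (Fin n)) :=
    fun i => Finset.univ.filter (fun e => e.card ∈ Finset.Icc 2 M ∧ i ∈ e) with hE_def
  set S : Fin n → Ω → ℝ := fun i ω => ∑ e ∈ E i, X e ω with hS_def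
  -- row sums equal S i
  have hrow : ∀ i ω, ∑ j, adjMatrix n M T ω i j = S i ω := by
    intro i ω
    rw [rowsum_eq]
    simp only [hS_def]
    have hmap : ∀ e ∈ E i, e.card ∈ Finset.Icc 2 M := by
      intro e he; exact ((Finset.mem_filter.1 he).2).1
    rw [← Finset.sum_fiberwise_of_maps_to hmap (fun e => X e ω)]
    refine Finset.sum_congr rfl fun m hm => ?_
    have hfil : (E i).filter (fun e => e.card = m)
        = Finset.univ.filter (fun e : Finset (Fin n) => e.card = m ∧ i ∈ e) := by
      ext e
      simp only [hE_def, Finset.mem_filter, Finset.mem_univ, true_and]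
      constructor
      · rintro ⟨⟨_, hie⟩, hcard⟩; exact ⟨hcard, hie⟩
      · rintro ⟨hcard, hie⟩; exact ⟨⟨hcard ▸ hm, hie⟩, hcard⟩
    rw [hfil]
    refine Finset.sum_congr rfl fun e he => ?_
    simp only [Finset.mem_filter, Finset.mem_univ, true_and] at he
    simp only [hX_def, he.1]
  -- fiber sums of p are bounded by dm m
  have hfiber : ∀ (i : Fin n) (m : ℕ), m ∈ Finset.Icc 2 M →
      ∑ e ∈ Finset.univ.filter (fun e : Finset (Fin n) => e.card = m ∧ i ∈ e), p e ≤ dm m := by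
    intro i m hm
    set F := Finset.univ.filter (fun e : Finset (Fin n) => e.card = m ∧ i ∈ e) with hF_def
    rcases F.eq_empty_or_nonempty with hF | hF
    · rw [hF, Finset.sum_empty]; exact hdm m
    · obtain ⟨e₀, he₀⟩ := hF
      have he₀' := Finset.mem_filter.1 he₀
      have hmn : m ≤ n := by
        have h1 := Finset.card_le_card (Finset.subset_univ e₀)
        rw [he₀'.2.1, Finset.card_univ, Fintype.card_fin] at h1
        exact h1
      have hchoosepos : 0 < n.choose (m - 1) := Nat.choose_pos (by omega)
      have hcard : F.card ≤ (n - 1).choose (m - 1) := by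
        have hmaps : ∀ e ∈ F, e.erase i ∈ (Finset.univ.erase i).powersetCard (m - 1) := by
          intro e he
          have he' := Finset.mem_filter.1 he
          rw [Finset.mem_powersetCard]
          exact ⟨Finset.erase_subset_erase i (Finset.subset_univ e),
            by rw [Finset.card_erase_of_mem he'.2.2, he'.2.1]⟩
        have hinj : (↑F : Set (Finset (Fin n))).InjOn (fun e => e.erase i) := by
          intro e he e' he' heq
          have hie : i ∈ e := (Finset.mem_filter.1 (Finset.mem_coe.1 he)).2.2
          have hie' : i ∈ e' := (Finset.mem_filter.1 (Finset.mem_coe.1 he')).2.2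
          have : insert i (e.erase i) = insert i (e'.erase i) := by
            simp only at heq; rw [heq]
          rwa [Finset.insert_erase hie, Finset.insert_erase hie'] at this
        have h2 := Finset.card_le_card_of_injOn _ hmaps hinj
        rwa [Finset.card_powersetCard, Finset.card_erase_of_mem (Finset.mem_univ i),
          Finset.card_univ, Fintype.card_fin] at h2
      have hchoose_le : ((F.card : ℝ)) ≤ (n.choose (m - 1) : ℝ) := by
        exact_mod_cast hcard.trans (Nat.choose_le_choose (m - 1) (by omega))
      calc ∑ e ∈ F, p e ≤ ∑ _e ∈ F, dm m / (n.choose (m - 1) : ℝ) := by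
            refine Finset.sum_le_sum fun e he => ?_
            have he' := Finset.mem_filter.1 he
            have := hpbound e (he'.2.1 ▸ hm)
            rwa [he'.2.1] at this
        _ = (F.card : ℝ) * (dm m / (n.choose (m - 1) : ℝ)) := by
            rw [Finset.sum_const, nsmul_eq_mul]
        _ ≤ (n.choose (m - 1) : ℝ) * (dm m / (n.choose (m - 1) : ℝ)) := by
            have hnum : (0:ℝ) ≤ dm m / (n.choose (m - 1) : ℝ) := div_nonneg (hdm m) (Nat.cast_nonneg _)
            exact mul_le_mul_of_nonneg_right hchoose_le hnum
        _ = dm m := by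
            field_simp
  -- fiber sum bound : ∑ over E i of p e * (exp (s*(card-1)) - 1) ≤ d * (exp (3/2) - 1) / b
  have hsum_p : ∀ i : Fin n, ∑ e ∈ E i, p e * (Real.exp (s * ((e.card : ℝ) - 1)) - 1)
      ≤ d * (Real.exp (3/2) - 1) / b := by
    intro i
    have hmap : ∀ e ∈ E i, e.card ∈ Finset.Icc 2 M := by
      intro e he; exact ((Finset.mem_filter.1 he).2).1
    rw [← Finset.sum_fiberwise_of_maps_to hmap
      (fun e => p e * (Real.exp (s * ((e.card : ℝ) - 1)) - 1))]
    have hbound : ∀ m ∈ Finset.Icc 2 M,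
        ∑ e ∈ (E i).filter (fun e => e.card = m),
            p e * (Real.exp (s * ((e.card : ℝ) - 1)) - 1)
          ≤ ((m : ℝ) - 1) * dm m * ((Real.exp (3/2) - 1) / b) := by
      intro m hm
      have hm' := Finset.mem_Icc.1 hm
      have hfil : (E i).filter (fun e => e.card = m)
          = Finset.univ.filter (fun e : Finset (Fin n) => e.card = m ∧ i ∈ e) := by
        ext e
        simp only [hE_def, Finset.mem_filter, Finset.mem_univ, true_and]
        constructor
        · rintro ⟨⟨_, hie⟩, hcard⟩; exact ⟨hcard, hie⟩
        · rintro ⟨hcard, hie⟩; exact ⟨⟨hcard ▸ hm, hie⟩, hcard⟩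
      have ha0 : (0:ℝ) ≤ (m : ℝ) - 1 := by
        have : (2:ℝ) ≤ (m:ℝ) := by exact_mod_cast hm'.1
        linarith
      have hab : (m : ℝ) - 1 ≤ b := by
        rw [hb_def]
        have : (m:ℝ) ≤ (M:ℝ) := by exact_mod_cast hm'.2
        linarith
      have hcm0 : 0 ≤ Real.exp (s * ((m : ℝ) - 1)) - 1 := by
        have : (0:ℝ) ≤ s * ((m : ℝ) - 1) := by positivity
        have := Real.exp_le_exp.2 this
        simp only [Real.exp_zero] at this
        linarith [Real.one_le_exp (by positivity : (0:ℝ) ≤ s * ((m : ℝ) - 1))]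
      have hcm : Real.exp (s * ((m : ℝ) - 1)) - 1
          ≤ (((m : ℝ) - 1) / b) * (Real.exp (3/2) - 1) := by
        have := convex_exp_bound hs0.le ha0 hab hb0
        rwa [hsb] at this
      calc ∑ e ∈ (E i).filter (fun e => e.card = m),
              p e * (Real.exp (s * ((e.card : ℝ) - 1)) - 1)
          = ∑ e ∈ Finset.univ.filter (fun e : Finset (Fin n) => e.card = m ∧ i ∈ e),
              p e * (Real.exp (s * ((m : ℝ) - 1)) - 1) := by
            rw [hfil]
            refine Finset.sum_congr rfl fun e he => ?_
            rw [(Finset.mem_filter.1 he).2.1]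
        _ = (∑ e ∈ Finset.univ.filter (fun e : Finset (Fin n) => e.card = m ∧ i ∈ e), p e)
              * (Real.exp (s * ((m : ℝ) - 1)) - 1) := by
            rw [← Finset.sum_mul]
        _ ≤ dm m * (Real.exp (s * ((m : ℝ) - 1)) - 1) :=
            mul_le_mul_of_nonneg_right (hfiber i m hm) hcm0
        _ ≤ dm m * ((((m : ℝ) - 1) / b) * (Real.exp (3/2) - 1)) :=
            mul_le_mul_of_nonneg_left hcm (hdm m)
        _ = ((m : ℝ) - 1) * dm m * ((Real.exp (3/2) - 1) / b) := by
            field_simp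
    calc ∑ m ∈ Finset.Icc 2 M, ∑ e ∈ (E i).filter (fun e => e.card = m),
            p e * (Real.exp (s * ((e.card : ℝ) - 1)) - 1)
        ≤ ∑ m ∈ Finset.Icc 2 M, ((m : ℝ) - 1) * dm m * ((Real.exp (3/2) - 1) / b) :=
          Finset.sum_le_sum hbound
      _ = d * (Real.exp (3/2) - 1) / b := by
          rw [← Finset.sum_mul, ← hd_def]; ring
  -- per-row Chernoff
  have hcher : ∀ i : Fin n,
      μ {ω | α * d ≤ S i ω} ≤ ENNReal.ofReal ((n : ℝ) ^ (-(1 + K))) := by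
    intro i
    have hSfun : S i = ∑ e ∈ E i, X e := by
      funext ω; rw [hS_def]; rw [Finset.sum_apply]
    have hSmeas : Measurable (S i) := by
      have : Measurable fun ω => ∑ e ∈ E i, X e ω :=
        Finset.measurable_sum _ (fun e _ => hXmeas e)
      simpa [hS_def] using this
    -- bounds on X
    have hXle : ∀ e ∈ E i, ∀ ω, X e ω ≤ (e.card : ℝ) := by
      intro e he ω
      simp only [hX_def]
      by_cases h : T e ω
      · rw [if_pos h, mul_one]; linarith
      · rw [if_neg h, mul_zero]; positivity
    set C0 : ℝ := ∑ e ∈ E i, (e.card : ℝ) with hC0_def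
    have hSle : ∀ ω, S i ω ≤ C0 := by
      intro ω
      rw [hS_def]
      exact Finset.sum_le_sum fun e he => hXle e he ω
    have hint : Integrable (fun ω => Real.exp (s * S i ω)) μ := by
      refine (integrable_const (Real.exp (s * C0))).mono'
        ((hSmeas.const_mul s).exp.aestronglyMeasurable) (ae_of_all _ fun ω => ?_)
      rw [Real.norm_eq_abs, Real.abs_exp]
      exact Real.exp_le_exp.2 (mul_le_mul_of_nonneg_left (hSle ω) hs0.le)
    have h1 := ProbabilityTheory.measure_ge_le_exp_mul_mgf (μ := μ) (X := S i) (t := s)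
      (α * d) hs0.le hint
    -- compute/bound the mgf
    have h2 : ProbabilityTheory.mgf (S i) μ s = ∏ e ∈ E i, ProbabilityTheory.mgf (X e) μ s := by
      rw [hSfun]
      exact hXindep.mgf_sum hXmeas (E i)
    have h3 : ∀ e ∈ E i, ProbabilityTheory.mgf (X e) μ s
        = 1 + p e * (Real.exp (s * ((e.card : ℝ) - 1)) - 1) := by
      intro e _
      exact bernoulli_mgf μ (T e) (hTmeas e) (p e) (hp0 e) (hpT e) ((e.card : ℝ) - 1) s
    have hq0 : ∀ e ∈ E i, 0 ≤ p e * (Real.exp (s * ((e.card : ℝ) - 1)) - 1) := by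
      intro e he
      have hcard2 : 2 ≤ e.card := (Finset.mem_Icc.1 ((Finset.mem_filter.1 he).2.1)).1
      have hcr : (0:ℝ) ≤ (e.card : ℝ) - 1 := by
        have : (1:ℝ) ≤ (e.card : ℝ) := Nat.one_le_cast.mpr (by omega)
        linarith
      have : (1:ℝ) ≤ Real.exp (s * ((e.card : ℝ) - 1)) :=
        Real.one_le_exp (mul_nonneg hs0.le hcr)
      exact mul_nonneg (hp0 e) (by linarith)
    have h4 : ProbabilityTheory.mgf (S i) μ s
        ≤ Real.exp (∑ e ∈ E i, p e * (Real.exp (s * ((e.card : ℝ) - 1)) - 1)) := by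
      rw [h2, Finset.prod_congr rfl h3, Real.exp_sum]
      refine Finset.prod_le_prod (fun e he => by linarith [hq0 e he]) (fun e he => ?_)
      have := Real.add_one_le_exp (p e * (Real.exp (s * ((e.card : ℝ) - 1)) - 1))
      linarith
    have h5 : ProbabilityTheory.mgf (S i) μ s ≤ Real.exp (d * (Real.exp (3/2) - 1) / b) :=
      h4.trans (Real.exp_le_exp.2 (hsum_p i))
    -- numeric estimate
    have hsa : s * α = 6 / b + (1 + K) / c := by
      rw [hs_def, hα_def]
      field_simp
      ring
    have h7 : Real.exp (3/2) < 7 := exp_three_halves_lt_seven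
    have hlog_le : Real.log n ≤ d / c := (le_div_iff₀ hc).2 (by linarith [hd])
    have hnum : -s * (α * d) + d * (Real.exp (3/2) - 1) / b ≤ -((1 + K) * Real.log n) := by
      have e1 : s * (α * d) = 6 * (d / b) + (1 + K) * (d / c) := by
        have : s * (α * d) = (s * α) * d := by ring
        rw [this, hsa]; ring
      have e2 : d * (Real.exp (3/2) - 1) / b ≤ 6 * (d / b) := by
        have : d * (Real.exp (3/2) - 1) / b = (Real.exp (3/2) - 1) * (d / b) := by ring
        rw [this]
        have hdb : 0 ≤ d / b := by positivity
        exact mul_le_mul_of_nonneg_right (by linarith) hdb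
      have e3 : (1 + K) * Real.log n ≤ (1 + K) * (d / c) :=
        mul_le_mul_of_nonneg_left hlog_le (by linarith)
      linarith
    have h6 : (μ {ω | α * d ≤ S i ω}).toReal ≤ (n : ℝ) ^ (-(1 + K)) := by
      have hchain : (μ {ω | α * d ≤ S i ω}).toReal
          ≤ Real.exp (-s * (α * d)) * Real.exp (d * (Real.exp (3/2) - 1) / b) := by
        refine h1.trans ?_
        exact mul_le_mul_of_nonneg_left h5 (Real.exp_pos _).le
      rw [← Real.exp_add] at hchain
      have : (n : ℝ) ^ (-(1 + K)) = Real.exp (-((1 + K) * Real.log n)) := by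
        rw [Real.rpow_def_of_pos (by positivity : (0:ℝ) < (n:ℝ))]
        ring_nf
      rw [this]
      exact hchain.trans (Real.exp_le_exp.2 hnum)
    calc μ {ω | α * d ≤ S i ω}
        = ENNReal.ofReal (μ {ω | α * d ≤ S i ω}).toReal :=
          (ENNReal.ofReal_toReal (measure_ne_top μ _)).symm
      _ ≤ ENNReal.ofReal ((n : ℝ) ^ (-(1 + K))) := ENNReal.ofReal_le_ofReal h6
  -- union bound and conclusion
  have hSmeas' : ∀ i : Fin n, Measurable (S i) := fun i => by
    simpa [hS_def] using Finset.measurable_sum (E i) (fun e _ => hXmeas e)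
  set U : Set Ω := ⋃ i : Fin n, {ω | α * d ≤ S i ω} with hU_def
  have hUmeas : MeasurableSet U :=
    MeasurableSet.iUnion fun i => measurableSet_le measurable_const (hSmeas' i)
  have hn0 : (0:ℝ) < (n:ℝ) := by positivity
  have hU : μ U ≤ ENNReal.ofReal ((n : ℝ) ^ (-K)) := by
    calc μ U ≤ ∑' i : Fin n, μ {ω | α * d ≤ S i ω} := measure_iUnion_le _
      _ = ∑ i : Fin n, μ {ω | α * d ≤ S i ω} := tsum_fintype _
      _ ≤ ∑ _i : Fin n, ENNReal.ofReal ((n : ℝ) ^ (-(1 + K))) :=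
          Finset.sum_le_sum fun i _ => hcher i
      _ = (n : ℕ∞).toENNReal * ENNReal.ofReal ((n : ℝ) ^ (-(1 + K))) := by
          rw [Finset.sum_const, Finset.card_univ, Fintype.card_fin, nsmul_eq_mul]
          norm_cast
      _ = ENNReal.ofReal ((n : ℝ) * (n : ℝ) ^ (-(1 + K))) := by
          rw [ENNReal.ofReal_mul (Nat.cast_nonneg n), ENNReal.ofReal_natCast]
          norm_cast
      _ = ENNReal.ofReal ((n : ℝ) ^ (-K)) := by
          congr 1
          have h9 : (n:ℝ) * (n:ℝ) ^ (-(1+K)) = (n:ℝ) ^ ((1:ℝ) + -(1+K)) := by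
            rw [Real.rpow_add hn0, Real.rpow_one]
          rw [h9]; norm_num
  have hcompl : Uᶜ ⊆ {ω | ∀ i : Fin n, ∑ j, adjMatrix n M T ω i j ≤ α * d} := by
    intro ω hω i
    simp only [hU_def, Set.compl_iUnion, Set.mem_iInter, Set.mem_compl_iff,
      Set.mem_setOf_eq, not_le] at hω
    rw [hrow i ω]
    exact (hω i).le
  calc ENNReal.ofReal (1 - (n : ℝ) ^ (-K))
      = 1 - ENNReal.ofReal ((n : ℝ) ^ (-K)) := by
        rw [ENNReal.ofReal_sub _ (by positivity : (0:ℝ) ≤ (n:ℝ) ^ (-K)), ENNReal.ofReal_one]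
    _ ≤ 1 - μ U := tsub_le_tsub_left hU 1
    _ = μ Uᶜ := (prob_compl_eq_one_sub hUmeas).symm
    _ ≤ μ {ω | ∀ i : Fin n, ∑ j, adjMatrix n M T ω i j ≤ α * d} := measure_mono hcompl
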